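/- arXiv:2603.26399 — 4 statements merged into one kernel-verified Lean document; each statement's English description precedes it below -/
import Mathlib

section
/- For every integer n ≥ 2 and every integer m ≥ 1, we have (1/n) · Σ_{n ≥ n_1 ≥ n_2 ≥ ⋯ ≥ n_m ≥ 1} 1/(n_1 n_2 ⋯ n_m) < 1, where the sum is over weakly decreasing m-tuples of positive integers bounded above by n. -/
open scoped BigOperators

noncomputable section AuxStmt0

def DD (n m : ℕ) : Finset (Fin m → ℕ) :=
  (Fintype.piFinset fun _ => Finset.Icc 1 n).filter
    fun f => ∀ i j : Fin m, i ≤ j → f j ≤ f i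

lemma mem_DD {n m : ℕ} {f : Fin m → ℕ} :
    f ∈ DD n m ↔ (∀ i, 1 ≤ f i) ∧ (∀ i, f i ≤ n) ∧
      (∀ i j : Fin m, i ≤ j → f j ≤ f i) := by
  simp only [DD, Finset.mem_filter, Fintype.mem_piFinset, Finset.mem_Icc]
  constructor
  · rintro ⟨h1, h2⟩
    exact ⟨fun i => (h1 i).1, fun i => (h1 i).2, h2⟩
  · rintro ⟨h1, h2, h3⟩
    exact ⟨fun i => ⟨h1 i, h2 i⟩, h3⟩

def SS (n m : ℕ) : ℝ := ∑ f ∈ DD n m, ∏ i, ((f i : ℝ))⁻¹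

lemma SS_zero (n : ℕ) : SS n 0 = 1 := by
  have : DD n 0 = {![]} := by
    ext f
    simp [mem_DD, Subsingleton.elim f ![]]
  simp [SS, this]

lemma SS_rec (n m : ℕ) :
    SS n (m + 1) = ∑ k ∈ Finset.Icc 1 n, (k : ℝ)⁻¹ * SS k m := by
  have h : ∀ k ∈ Finset.Icc 1 n, (k : ℝ)⁻¹ * SS k m
      = ∑ f ∈ DD k m, ∏ i : Fin (m+1), (((Fin.cons k f : Fin (m+1) → ℕ) i : ℝ))⁻¹ := by
    intro k hk
    rw [SS, Finset.mul_sum]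
    refine Finset.sum_congr rfl fun f hf => ?_
    rw [Fin.prod_univ_succ]
    simp [Fin.cons_succ]
  rw [Finset.sum_congr rfl h, SS]
  rw [← Finset.sum_sigma (Finset.Icc 1 n) (fun k => DD k m)
      (fun p => ∏ i : Fin (m+1), (((Fin.cons p.1 p.2 : Fin (m+1) → ℕ) i : ℝ))⁻¹)]
  refine Finset.sum_nbij' (fun f => ⟨f 0, Fin.tail f⟩) (fun p => Fin.cons p.1 p.2)
    ?mem1 ?mem2 ?li ?ri ?val
  case mem2 =>
    rintro ⟨k, f⟩ hp
    simp only [Finset.mem_sigma, Finset.mem_Icc, mem_DD] at hp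
    obtain ⟨⟨hk1, hk2⟩, hf1, hf2, hf3⟩ := hp
    rw [mem_DD]
    refine ⟨?_, ?_, ?_⟩
    · intro i
      refine Fin.cases ?_ ?_ i
      · simpa using hk1
      · intro j; simpa using hf1 j
    · intro i
      refine Fin.cases ?_ ?_ i
      · simpa using hk2
      · intro j; simp only [Fin.cons_succ]; exact le_trans (hf2 j) hk2
    · intro i j
      refine Fin.cases ?_ ?_ j
      · intro hij
        have hi : i = 0 := Fin.le_zero_iff.mp hij
        subst hi
        exact le_refl _
      · intro j'
        refine Fin.cases ?_ ?_ i
        · intro _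
          simp only [Fin.cons_zero, Fin.cons_succ]
          exact hf2 j'
        · intro i' hij'
          simp only [Fin.cons_succ]
          exact hf3 i' j' (Fin.succ_le_succ_iff.mp hij')
  case mem1 =>
    intro f hf
    rw [mem_DD] at hf
    obtain ⟨h1, h2, h3⟩ := hf
    simp only [Finset.mem_sigma, Finset.mem_Icc, mem_DD]
    refine ⟨⟨h1 0, h2 0⟩, fun i => h1 _, fun i => h3 0 i.succ (Fin.zero_le _), ?_⟩
    intro i j hij
    exact h3 i.succ j.succ (Fin.succ_le_succ_iff.mpr hij)
  case ri =>
    rintro ⟨k, f⟩ hp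
    simp [Fin.tail_cons]
  case li =>
    intro f hf
    simp [Fin.cons_self_tail]
  case val =>
    intro f hf
    rw [mem_DD] at hf
    obtain ⟨h1, h2, h3⟩ := hf
    simp [Fin.cons_self_tail]

lemma SS_nonneg (n m : ℕ) : 0 ≤ SS n m := by
  apply Finset.sum_nonneg
  intro f hf
  apply Finset.prod_nonneg
  intro i _
  positivity

lemma SS_le (m : ℕ) : ∀ n, 1 ≤ n → SS n m ≤ n := by
  induction m with
  | zero => intro n hn; rw [SS_zero]; exact_mod_cast hn
  | succ m ih =>
    intro n hn
    rw [SS_rec]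
    calc ∑ k ∈ Finset.Icc 1 n, (k : ℝ)⁻¹ * SS k m
        ≤ ∑ k ∈ Finset.Icc 1 n, 1 := by
          apply Finset.sum_le_sum
          intro k hk
          rw [Finset.mem_Icc] at hk
          have hk0 : (0:ℝ) < k := by exact_mod_cast hk.1
          rw [inv_mul_le_iff₀ hk0, mul_one]
          exact ih k hk.1
      _ = n := by simp [Nat.card_Icc]

lemma SS_lt (m : ℕ) (hm : 1 ≤ m) : ∀ n, 2 ≤ n → SS n m < n := by
  induction m with
  | zero => omega
  | succ m ih =>
    intro n hn
    rw [SS_rec]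
    have hn1 : 1 ≤ n := by omega
    calc ∑ k ∈ Finset.Icc 1 n, (k : ℝ)⁻¹ * SS k m
        < ∑ k ∈ Finset.Icc 1 n, 1 := by
          apply Finset.sum_lt_sum
          · intro k hk
            rw [Finset.mem_Icc] at hk
            have hk0 : (0:ℝ) < k := by exact_mod_cast hk.1
            rw [inv_mul_le_iff₀ hk0, mul_one]
            exact SS_le m k hk.1
          · refine ⟨n, Finset.mem_Icc.mpr ⟨hn1, le_refl n⟩, ?_⟩
            have hn0 : (0:ℝ) < n := by positivity
            rw [inv_mul_lt_iff₀ hn0, mul_one]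
            rcases Nat.eq_zero_or_pos m with hm0 | hm1
            · subst hm0; rw [SS_zero]; exact_mod_cast hn
            · exact ih hm1 n hn
      _ = n := by simp [Nat.card_Icc]

end AuxStmt0

/-- for n ≥ 2, m ≥ 1,
(1/n) · Σ_{n ≥ n_1 ≥ ⋯ ≥ n_m ≥ 1} 1/(n_1 ⋯ n_m) < 1. -/
theorem stmt0 (n m : ℕ) (hn : 2 ≤ n) (hm : 1 ≤ m) :
    (n : ℝ)⁻¹ *
      ∑' f : {f : Fin m → ℕ // (∀ i, 1 ≤ f i) ∧ (∀ i, f i ≤ n) ∧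
          (∀ i j : Fin m, i ≤ j → (f : Fin m → ℕ) j ≤ f i)},
        ∏ i, ((f.1 i : ℝ))⁻¹ < 1 := by
  have hiff : ∀ f : Fin m → ℕ,
      ((∀ i, 1 ≤ f i) ∧ (∀ i, f i ≤ n) ∧ (∀ i j : Fin m, i ≤ j → f j ≤ f i))
        ↔ f ∈ DD n m := fun f => (mem_DD).symm
  have e := Equiv.subtypeEquivRight hiff
  have key : (∑' f : {f : Fin m → ℕ // (∀ i, 1 ≤ f i) ∧ (∀ i, f i ≤ n) ∧
      (∀ i j : Fin m, i ≤ j → (f : Fin m → ℕ) j ≤ f i)}, ∏ i, ((f.1 i : ℝ))⁻¹)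
      = SS n m := by
    calc (∑' f : {f : Fin m → ℕ // (∀ i, 1 ≤ f i) ∧ (∀ i, f i ≤ n) ∧
          (∀ i j : Fin m, i ≤ j → (f : Fin m → ℕ) j ≤ f i)}, ∏ i, ((f.1 i : ℝ))⁻¹)
        = ∑' f : {f // f ∈ DD n m}, ∏ i, ((f.1 i : ℝ))⁻¹ := by
          rw [← Equiv.tsum_eq (Equiv.subtypeEquivRight hiff)
            (fun f : {f // f ∈ DD n m} => ∏ i, ((f.1 i : ℝ))⁻¹)]
          exact tsum_congr fun c => by simp [Equiv.subtypeEquivRight]; rfl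
      _ = SS n m := Finset.tsum_subtype (DD n m) (fun f => ∏ i, ((f i : ℝ))⁻¹)
  rw [key]
  have hn0 : (0:ℝ) < n := by positivity
  rw [inv_mul_lt_iff₀ hn0, mul_one]
  exact SS_lt m hm n hn
end

section
/- For an admissible index (k_1, …, k_r) (with k_1 ≥ 2 and k_i ≥ 1) and any m ≥ 1, the multiple zeta-star value satisfies ζ*(k_1, …, k_{r-1}, k_r + 1, 1, …, 1) < ζ*(k_1, …, k_{r-1}, k_r), where m ones are appended. -/
set_option maxHeartbeats 1000000

open scoped BigOperators

/-- The set of weakly decreasing tuples of positive integers of length `r`. -/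
def DecTuple (r : ℕ) : Set (Fin r → ℕ) :=
  {f | (∀ i, 1 ≤ f i) ∧ ∀ i j : Fin r, i ≤ j → f j ≤ f i}

/-- The multiple zeta-star value of an index `k`. -/
noncomputable def zetaStar {r : ℕ} (k : Fin r → ℕ) : ℝ :=
  ∑' f : DecTuple r, ∏ i, (((f : Fin r → ℕ) i : ℝ) ^ (k i))⁻¹

open Finset

open Finset

/-- weakly decreasing m-tuples with entries in [1,b] -/
noncomputable def Atup (m b : ℕ) : Finset (Fin m → ℕ) := by
  classical
  exact (Fintype.piFinset fun _ => Finset.Icc 1 b).filter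
    fun a => ∀ j j' : Fin m, j ≤ j' → a j' ≤ a j

lemma mem_Atup {m b : ℕ} {a : Fin m → ℕ} :
    a ∈ Atup m b ↔ (∀ j, 1 ≤ a j ∧ a j ≤ b) ∧ ∀ j j' : Fin m, j ≤ j' → a j' ≤ a j := by
  classical
  simp [Atup, Fintype.mem_piFinset, Finset.mem_Icc, forall_and]

noncomputable def Usum (m b : ℕ) : ℝ := ∑ a ∈ Atup m b, ∏ j, ((a j : ℝ))⁻¹

lemma Usum_zero (b : ℕ) (hb : 1 ≤ b) : Usum 0 b = 1 := by
  have : Atup 0 b = {(fun j => j.elim0)} := by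
    ext a
    simp [mem_Atup]
    exact funext fun j => j.elim0
  simp [Usum, this]

lemma Usum_succ (m b : ℕ) :
    Usum (m+1) b = ∑ c ∈ Finset.Icc 1 b, (c : ℝ)⁻¹ * Usum m c := by
  classical
  have key : Usum (m+1) b
      = ∑ p ∈ (Finset.Icc 1 b).sigma (fun c => Atup m c), ((p.1 : ℝ)⁻¹ * ∏ j, ((p.2 j : ℝ))⁻¹) := by
    refine Finset.sum_nbij' (fun a => ⟨a 0, Fin.tail a⟩) (fun p => Fin.cons p.1 p.2) ?_ ?_ ?_ ?_ ?_
    · intro a ha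
      rw [mem_Atup] at ha
      obtain ⟨h1, h2⟩ := ha
      refine Finset.mem_sigma.2 ⟨Finset.mem_Icc.2 ⟨(h1 0).1, (h1 0).2⟩, ?_⟩
      rw [mem_Atup]
      constructor
      · intro j
        exact ⟨(h1 j.succ).1, h2 0 j.succ (Fin.zero_le _)⟩
      · intro j j' hle
        exact h2 j.succ j'.succ (by simpa using hle)
    · intro p hp
      obtain ⟨hc, ha⟩ := Finset.mem_sigma.1 hp
      rw [Finset.mem_Icc] at hc
      rw [mem_Atup] at ha ⊢
      constructor
      · intro j
        refine Fin.cases ?_ ?_ j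
        · simpa using hc
        · intro i
          simp only [Fin.cons_succ]
          exact ⟨(ha.1 i).1, le_trans (ha.1 i).2 hc.2⟩
      · intro j j' hle
        rcases Fin.eq_zero_or_eq_succ j' with rfl | ⟨i, rfl⟩
        · have : j = 0 := le_antisymm (by simpa using hle) (Fin.zero_le _)
          simp [this]
        · rcases Fin.eq_zero_or_eq_succ j with rfl | ⟨i', rfl⟩
          · simp only [Fin.cons_zero, Fin.cons_succ]
            exact (ha.1 i).2
          · simp only [Fin.cons_succ]
            exact ha.2 i' i (by simpa using hle)
    · intro a _; exact Fin.cons_self_tail a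
    · intro p _; simp [Fin.tail_cons]
    · intro a _
      simp only
      rw [← Fin.prod_cons (a 0 : ℝ)⁻¹ (fun i => ((Fin.tail a i : ℝ))⁻¹)]
      refine Finset.prod_congr rfl fun i _ => ?_
      refine Fin.cases ?_ ?_ i
      · simp
      · intro i'; simp [Fin.tail]
  rw [key, Finset.sum_sigma]
  simp [Usum, Finset.mul_sum]

lemma Usum_le (m : ℕ) : ∀ b : ℕ, 1 ≤ b → Usum m b ≤ b := by
  induction m with
  | zero => intro b hb; rw [Usum_zero b hb]; exact_mod_cast hb
  | succ m ih =>
    intro b hb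
    rw [Usum_succ]
    calc ∑ c ∈ Finset.Icc 1 b, (c : ℝ)⁻¹ * Usum m c
        ≤ ∑ c ∈ Finset.Icc 1 b, 1 := by
          refine Finset.sum_le_sum fun c hc => ?_
          rw [Finset.mem_Icc] at hc
          have hc0 : (0 : ℝ) < c := by exact_mod_cast hc.1
          have := ih c hc.1
          calc (c : ℝ)⁻¹ * Usum m c ≤ (c : ℝ)⁻¹ * c :=
                mul_le_mul_of_nonneg_left this (inv_nonneg.2 hc0.le)
            _ = 1 := inv_mul_cancel₀ hc0.ne'
      _ = b := by simp [Nat.card_Icc]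

lemma Usum_nonneg (m b : ℕ) : 0 ≤ Usum m b := by
  refine Finset.sum_nonneg fun a _ => Finset.prod_nonneg fun j _ => by positivity

lemma Usum_lt (m : ℕ) : ∀ b : ℕ, 2 ≤ b → Usum m b < b := by
  induction m with
  | zero =>
    intro b hb; rw [Usum_zero b (by omega)]; exact_mod_cast by omega
  | succ m ih =>
    intro b hb
    rw [Usum_succ]
    have hbmem : b ∈ Finset.Icc 1 b := Finset.mem_Icc.2 ⟨by omega, le_refl b⟩
    calc ∑ c ∈ Finset.Icc 1 b, (c : ℝ)⁻¹ * Usum m c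
        < ∑ c ∈ Finset.Icc 1 b, 1 := by
          refine Finset.sum_lt_sum (fun c hc => ?_) ⟨b, hbmem, ?_⟩
          · rw [Finset.mem_Icc] at hc
            have hc0 : (0 : ℝ) < c := by exact_mod_cast hc.1
            calc (c : ℝ)⁻¹ * Usum m c ≤ (c : ℝ)⁻¹ * c :=
                  mul_le_mul_of_nonneg_left (Usum_le m c hc.1) (inv_nonneg.2 hc0.le)
              _ = 1 := inv_mul_cancel₀ hc0.ne'
          · have hb0 : (0 : ℝ) < b := by positivity
            calc (b : ℝ)⁻¹ * Usum m b < (b : ℝ)⁻¹ * b := by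
                  refine mul_lt_mul_of_pos_left (ih b hb) (by positivity)
              _ = 1 := inv_mul_cancel₀ hb0.ne'
      _ = b := by simp [Nat.card_Icc]


lemma summable_pi_prod : ∀ (r : ℕ) (g : Fin r → ℕ → ℝ), (∀ i, Summable (g i)) →
    (∀ i n, 0 ≤ g i n) → Summable (fun f : Fin r → ℕ => ∏ i, g i (f i)) := by
  intro r
  induction r with
  | zero =>
    intro g _ _
    exact Summable.of_finite
  | succ r ih =>
    intro g hs hn
    have hA : Summable (g 0) := hs 0
    have hB : Summable (fun f : Fin r → ℕ => ∏ i, g i.succ (f i)) :=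
      ih (fun i => g i.succ) (fun i => hs i.succ) (fun i n => hn i.succ n)
    have h2 : Summable (fun p : ℕ × (Fin r → ℕ) => g 0 p.1 * ∏ i, g i.succ (p.2 i)) := by
      apply Summable.mul_of_nonneg hA hB
      · exact fun n => hn 0 n
      · exact fun f => Finset.prod_nonneg fun i _ => hn _ _
    rw [← (Fin.consEquiv (fun _ : Fin (r+1) => ℕ)).summable_iff]
    refine h2.congr fun p => ?_
    rw [Function.comp_apply]
    have : ⇑(Fin.consEquiv (fun _ : Fin (r+1) => ℕ)) p = Fin.cons p.1 p.2 := rfl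
    rw [this, Fin.prod_univ_succ]
    simp

/-- key pointwise bound: for a weakly decreasing tuple of positive integers,
the MZV term is bounded by a product of rpow terms. -/
lemma term_le {r : ℕ} (hr : 0 < r) (k : Fin r → ℕ) (hk2 : 2 ≤ k ⟨0, hr⟩)
    (hk1 : ∀ i, 1 ≤ k i) (f : Fin r → ℕ) (hf : f ∈ DecTuple r) :
    ∏ i, (((f i : ℝ)) ^ (k i))⁻¹ ≤ ∏ i, ((f i : ℝ)) ^ (-(1 + (2:ℝ)⁻¹ ^ ((i:ℕ)+1))) := by
  obtain ⟨h1, h2⟩ := hf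
  set i₀ : Fin r := ⟨0, hr⟩
  have hn1 : ∀ i, (1:ℝ) ≤ (f i : ℝ) := fun i => by exact_mod_cast h1 i
  have hn0 : ∀ i, (0:ℝ) < (f i : ℝ) := fun i => lt_of_lt_of_le one_pos (hn1 i)
  have hdec : ∀ i : Fin r, (f i : ℝ) ≤ (f i₀ : ℝ) := fun i => by
    exact_mod_cast h2 i₀ i (Fin.mk_le_mk.2 (Nat.zero_le _))
  set ε : Fin r → ℝ := fun i => (2:ℝ)⁻¹ ^ ((i:ℕ)+1) with hε
  have hε0 : ∀ i, 0 < ε i := fun i => by positivity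
  have hεsum : ∑ i, ε i ≤ 1 := by
    rw [Fin.sum_univ_eq_sum_range (fun i => (2:ℝ)⁻¹ ^ (i+1))]
    have : ∀ i, (2:ℝ)⁻¹ ^ (i+1) = (1/2) * (1/2)^i := by
      intro i; rw [pow_succ]; ring
    rw [Finset.sum_congr rfl fun i _ => this i, ← Finset.mul_sum]
    have := sum_geometric_two_le r
    linarith
  -- reduce to comparing products of positive numbers
  have hrw : ∀ i : Fin r, (f i : ℝ) ^ (-(1 + ε i)) = ((f i : ℝ) ^ (1 + ε i))⁻¹ := fun i =>
    Real.rpow_neg (hn0 i).le _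
  rw [Finset.prod_congr rfl fun i _ => hrw i, Finset.prod_inv_distrib,
    Finset.prod_inv_distrib]
  refine inv_anti₀ (Finset.prod_pos fun i _ => Real.rpow_pos_of_pos (hn0 i) _) ?_
  -- main chain
  have step1 : ∏ i, (f i : ℝ) ^ (1 + ε i) ≤ (f i₀ : ℝ) * ∏ i, (f i : ℝ) := by
    have hsplit : ∀ i : Fin r, (f i : ℝ) ^ (1 + ε i) = (f i : ℝ) * (f i : ℝ) ^ (ε i) := by
      intro i
      rw [Real.rpow_add (hn0 i), Real.rpow_one]
    rw [Finset.prod_congr rfl fun i _ => hsplit i, Finset.prod_mul_distrib]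
    rw [mul_comm ((f i₀ : ℝ)) _]
    refine mul_le_mul_of_nonneg_left ?_ (Finset.prod_nonneg fun i _ => (hn0 i).le)
    calc ∏ i, (f i : ℝ) ^ ε i
        ≤ ∏ i, (f i₀ : ℝ) ^ ε i :=
          Finset.prod_le_prod (fun i _ => (Real.rpow_pos_of_pos (hn0 i) _).le)
            (fun i _ => Real.rpow_le_rpow (hn0 i).le (hdec i) (hε0 i).le)
      _ = (f i₀ : ℝ) ^ (∑ i, ε i) := (Real.rpow_sum_of_pos (hn0 i₀) _ _).symm
      _ ≤ (f i₀ : ℝ) ^ (1:ℝ) := Real.rpow_le_rpow_of_exponent_le (hn1 i₀) hεsum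
      _ = (f i₀ : ℝ) := Real.rpow_one _
  have step2 : (f i₀ : ℝ) * ∏ i, (f i : ℝ) ≤ ∏ i, (f i : ℝ) ^ (k i) := by
    have hmem : i₀ ∈ Finset.univ := Finset.mem_univ i₀
    rw [← Finset.mul_prod_erase Finset.univ (fun i => ((f i : ℝ)) ^ (k i)) hmem,
        ← Finset.mul_prod_erase Finset.univ (fun i => ((f i : ℝ))) hmem, ← mul_assoc]
    refine mul_le_mul ?_ ?_ (Finset.prod_nonneg fun i _ => (hn0 i).le) ?_
    · calc (f i₀ : ℝ) * (f i₀ : ℝ) = (f i₀ : ℝ) ^ 2 := (sq _).symm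
        _ ≤ (f i₀ : ℝ) ^ (k i₀) := pow_le_pow_right₀ (hn1 i₀) hk2
    · refine Finset.prod_le_prod (fun i _ => (hn0 i).le) (fun i _ => ?_)
      exact le_self_pow₀ (hn1 i) (by have := hk1 i; omega)
    · positivity
  exact step1.trans step2


lemma summable_dec {r : ℕ} (hr : 0 < r) (k : Fin r → ℕ) (hk2 : 2 ≤ k ⟨0, hr⟩)
    (hk1 : ∀ i, 1 ≤ k i) :
    Summable (fun f : DecTuple r => ∏ i, (((f : Fin r → ℕ) i : ℝ) ^ (k i))⁻¹) := by
  have hG : Summable (fun f : Fin r → ℕ => ∏ i, ((f i : ℝ)) ^ (-(1 + (2:ℝ)⁻¹ ^ ((i:ℕ)+1)))) := by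
    refine summable_pi_prod r (fun i n => (n : ℝ) ^ (-(1 + (2:ℝ)⁻¹ ^ ((i:ℕ)+1)))) ?_ ?_
    · intro i
      refine Real.summable_nat_rpow.2 ?_
      have : (0:ℝ) < (2:ℝ)⁻¹ ^ ((i:ℕ)+1) := by positivity
      linarith
    · intro i n
      exact Real.rpow_nonneg (Nat.cast_nonneg n) _
  have hGsub := hG.subtype (DecTuple r)
  refine Summable.of_nonneg_of_le ?_ ?_ hGsub
  · intro f
    refine Finset.prod_nonneg fun i _ => ?_
    positivity
  · intro f
    exact term_le hr k hk2 hk1 f.val f.property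

section
variable (r m : ℕ)

/-- glue a front `r`-tuple and a back `m`-tuple -/
def jn (n : Fin r → ℕ) (a : Fin m → ℕ) : Fin (r+m) → ℕ :=
  fun i => if h : (i:ℕ) < r then n ⟨i,h⟩ else a ⟨(i:ℕ) - r, by have := i.isLt; omega⟩

variable (hr : 0 < r)

lemma front_mem (f : ↥(DecTuple (r+m))) :
    (fun i : Fin r => f.val ⟨i, by have := i.isLt; omega⟩) ∈ DecTuple r := by
  obtain ⟨h1, h2⟩ := f.property
  exact ⟨fun i => h1 _, fun i j hij => h2 _ _ (by simpa using hij)⟩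

/-- the projection to the first `r` coordinates -/
def proj (f : ↥(DecTuple (r+m))) : ↥(DecTuple r) :=
  ⟨fun i : Fin r => f.val ⟨i, by have := i.isLt; omega⟩, front_mem r m f⟩

lemma back_mem (f : ↥(DecTuple (r+m))) :
    (fun j : Fin m => f.val ⟨r + j, by have := j.isLt; omega⟩)
      ∈ Atup m (f.val ⟨r - 1, by omega⟩) := by
  obtain ⟨h1, h2⟩ := f.property
  rw [mem_Atup]
  refine ⟨fun j => ⟨h1 _, h2 _ _ ?_⟩, fun j j' hjj => h2 _ _ ?_⟩
  · exact Fin.mk_le_mk.2 (by omega)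
  · exact Fin.mk_le_mk.2 (by simp; omega)

lemma jn_mem (n : Fin r → ℕ) (hn : n ∈ DecTuple r) (a : Fin m → ℕ)
    (ha : a ∈ Atup m (n ⟨r - 1, by omega⟩)) : jn r m n a ∈ DecTuple (r+m) := by
  obtain ⟨h1, h2⟩ := hn
  rw [mem_Atup] at ha
  obtain ⟨ha1, ha2⟩ := ha
  constructor
  · intro i
    unfold jn
    split
    · exact h1 _
    · exact (ha1 _).1
  · intro i j hij
    have hij' : (i:ℕ) ≤ (j:ℕ) := hij
    unfold jn
    by_cases hj : (j:ℕ) < r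
    · have hi : (i:ℕ) < r := by omega
      rw [dif_pos hj, dif_pos hi]
      exact h2 _ _ (Fin.mk_le_mk.2 hij')
    · rw [dif_neg hj]
      by_cases hi : (i:ℕ) < r
      · rw [dif_pos hi]
        exact le_trans ((ha1 ⟨(j:ℕ) - r, by have := j.isLt; omega⟩).2)
          (h2 _ _ (Fin.mk_le_mk.2 (by omega)))
      · rw [dif_neg hi]
        exact ha2 _ _ (Fin.mk_le_mk.2 (by omega))

lemma proj_jn (n : ↥(DecTuple r)) (a : Fin m → ℕ)
    (ha : a ∈ Atup m (n.val ⟨r - 1, by omega⟩)) :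
    proj r m (⟨jn r m n.val a, jn_mem r m hr n.val n.property a ha⟩ : ↥(DecTuple (r+m))) = n := by
  apply Subtype.ext
  funext i
  show jn r m n.val a ⟨(i:ℕ), _⟩ = n.val i
  unfold jn
  rw [dif_pos i.isLt]

/-- the equivalence between a fiber of `proj` and the finset of decreasing tails -/
noncomputable def fiberEquiv (n : ↥(DecTuple r)) :
    ↥((proj r m) ⁻¹' {n}) ≃ ↥(Atup m (n.val ⟨r - 1, by omega⟩)) where
  toFun x := ⟨fun j : Fin m => x.val.val ⟨r + j, by have := j.isLt; omega⟩, by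
    have hx : proj r m x.val = n := x.property
    have hv : n.val = (proj r m x.val).val := by rw [hx]
    have hb : n.val ⟨r - 1, by omega⟩ = x.val.val ⟨r - 1, by omega⟩ := by
      rw [hv]; rfl
    rw [hb]
    exact back_mem r m hr x.val⟩
  invFun a := ⟨⟨jn r m n.val a.val, jn_mem r m hr n.val n.property a.val a.property⟩,
    proj_jn r m hr n a.val a.property⟩
  left_inv x := by
    apply Subtype.ext
    apply Subtype.ext
    funext i
    show jn r m n.val _ i = x.val.val i
    have hx : proj r m x.val = n := x.property
    have hv : (proj r m x.val).val = n.val := by rw [hx]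
    unfold jn
    split
    · rename_i h
      calc n.val ⟨(i:ℕ), h⟩ = (proj r m x.val).val ⟨(i:ℕ), h⟩ := by rw [hv]
        _ = x.val.val i := rfl
    · rename_i h
      show x.val.val ⟨r + ((i:ℕ) - r), _⟩ = x.val.val i
      exact congrArg x.val.val (Fin.ext (show r + ((i:ℕ) - r) = (i:ℕ) by omega))
  right_inv a := by
    apply Subtype.ext
    funext j
    show jn r m n.val a.val ⟨r + (j:ℕ), _⟩ = a.val j
    unfold jn
    rw [dif_neg (Nat.not_lt.2 (Nat.le_add_right r (j:ℕ)))]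
    exact congrArg a.val (Fin.ext (Nat.add_sub_cancel_left r (j:ℕ)))

end


lemma prod_split (r m : ℕ) (hr : 0 < r) (k : Fin r → ℕ)
    (n : Fin r → ℕ) (a : Fin m → ℕ) :
    ∏ i : Fin (r+m), ((jn r m n a i : ℝ) ^
        (if h : (i:ℕ) < r then (if (i:ℕ) = r - 1 then k ⟨i, h⟩ + 1 else k ⟨i, h⟩) else 1))⁻¹
      = ((∏ i, ((n i : ℝ) ^ (k i))⁻¹) * ((n ⟨r-1, by omega⟩ : ℝ))⁻¹) * ∏ j, ((a j : ℝ))⁻¹ := by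
  rw [Fin.prod_univ_add]
  congr 1
  · -- front block
    have hfront : ∀ i : Fin r, ((jn r m n a (Fin.castAdd m i) : ℝ) ^
        (if h : ((Fin.castAdd m i : Fin (r+m)) : ℕ) < r then
          (if ((Fin.castAdd m i : Fin (r+m)) : ℕ) = r - 1 then
            k ⟨(Fin.castAdd m i : Fin (r+m)), h⟩ + 1 else k ⟨(Fin.castAdd m i : Fin (r+m)), h⟩)
          else 1))⁻¹
        = ((n i : ℝ) ^ (k i))⁻¹ * (if i = (⟨r-1, by omega⟩ : Fin r) then ((n i : ℝ))⁻¹ else 1) := by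
      intro i
      have hilt : ((Fin.castAdd m i : Fin (r+m)) : ℕ) < r := by
        rw [Fin.coe_castAdd]; exact i.isLt
      rw [dif_pos hilt]
      have hjn : jn r m n a (Fin.castAdd m i) = n i := by
        unfold jn
        rw [dif_pos hilt]
        exact congrArg n (Fin.ext rfl)
      rw [hjn]
      have hkk : k ⟨(Fin.castAdd m i : Fin (r+m)), hilt⟩ = k i := rfl
      rw [hkk]
      by_cases hi : ((Fin.castAdd m i : Fin (r+m)) : ℕ) = r - 1
      · have hii : i = (⟨r-1, by omega⟩ : Fin r) := Fin.ext (show (i:ℕ) = r - 1 from hi)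
        rw [if_pos hi, if_pos hii, pow_succ, mul_inv]
      · have hii : ¬ i = (⟨r-1, by omega⟩ : Fin r) := by
          intro hcon
          exact hi (by rw [hcon]; rfl)
        rw [if_neg hi, if_neg hii, mul_one]
    rw [Finset.prod_congr rfl fun i _ => hfront i, Finset.prod_mul_distrib,
      Finset.prod_ite_eq' Finset.univ (⟨r-1, by omega⟩ : Fin r) (fun i => ((n i : ℝ))⁻¹),
      if_pos (Finset.mem_univ _)]
  · -- back block
    refine Finset.prod_congr rfl fun j _ => ?_
    have hnlt : ¬ ((Fin.natAdd r j : Fin (r+m)) : ℕ) < r := by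
      rw [Fin.coe_natAdd]; omega
    rw [dif_neg hnlt]
    have hjn : jn r m n a (Fin.natAdd r j) = a j := by
      unfold jn
      rw [dif_neg hnlt]
      exact congrArg a (Fin.ext (Nat.add_sub_cancel_left r (j:ℕ)))
    rw [hjn, pow_one]

/-- ζ*(k_1,…,k_{r-1},k_r+1,{1}^m) < ζ*(k_1,…,k_r). -/
theorem stmt1 (r m : ℕ) (hr : 1 ≤ r) (hm : 1 ≤ m) (k : Fin r → ℕ)
    (hadm : 2 ≤ k ⟨0, by omega⟩) (hpos : ∀ i, 1 ≤ k i) :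
    zetaStar (fun i : Fin (r + m) =>
      if h : (i : ℕ) < r then
        (if (i : ℕ) = r - 1 then k ⟨i, h⟩ + 1 else k ⟨i, h⟩)
      else 1) < zetaStar k := by
  classical
  have hr0 : 0 < r := hr
  have hrm : 0 < r + m := by omega
  set K : Fin (r + m) → ℕ := fun i =>
      if h : (i : ℕ) < r then
        (if (i : ℕ) = r - 1 then k ⟨i, h⟩ + 1 else k ⟨i, h⟩)
      else 1 with hK
  have hK1 : ∀ i, 1 ≤ K i := by
    intro i
    rw [hK]
    dsimp only
    split
    · split
      · omega
      · exact hpos _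
    · omega
  have hK2 : 2 ≤ K ⟨0, hrm⟩ := by
    rw [hK]
    dsimp only
    rw [dif_pos (show ((⟨0, hrm⟩ : Fin (r+m)) : ℕ) < r from hr0)]
    have h20 : 2 ≤ k ⟨0, hr0⟩ := hadm
    split
    · omega
    · exact h20
  have hFsum : Summable (fun f : DecTuple (r+m) =>
      ∏ i, (((f : Fin (r+m) → ℕ) i : ℝ) ^ (K i))⁻¹) := summable_dec hrm K hK2 hK1
  have hTsum : Summable (fun n : DecTuple r =>
      ∏ i, (((n : Fin r → ℕ) i : ℝ) ^ (k i))⁻¹) := summable_dec hr0 k hadm hpos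
  -- decompose LHS along the fibers of `proj`
  have hHS : HasSum (fun n : ↥(DecTuple r) =>
      ∑' x : (proj r m) ⁻¹' {n}, ∏ i, (((x.val : Fin (r+m) → ℕ) i : ℝ) ^ (K i))⁻¹)
      (zetaStar K) := by
    exact hFsum.hasSum.tsum_fiberwise (proj r m)
  -- compute each fiber sum
  have hfib : ∀ n : ↥(DecTuple r),
      (∑' x : (proj r m) ⁻¹' {n}, ∏ i, (((x.val : Fin (r+m) → ℕ) i : ℝ) ^ (K i))⁻¹)
        = (∏ i, ((n.val i : ℝ) ^ (k i))⁻¹) *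
            (((n.val ⟨r-1, by omega⟩ : ℕ) : ℝ)⁻¹ * Usum m (n.val ⟨r-1, by omega⟩)) := by
    intro n
    rw [← (fiberEquiv r m hr0 n).symm.tsum_eq]
    have hcongr : ∀ a : ↥(Atup m (n.val ⟨r-1, by omega⟩)),
        (∏ i, ((((((fiberEquiv r m hr0 n).symm a).val : ↥(DecTuple (r+m))) :
            Fin (r+m) → ℕ) i : ℝ) ^ (K i))⁻¹)
          = ∏ i, ((jn r m n.val a.val i : ℝ) ^ (K i))⁻¹ := fun a => rfl
    rw [tsum_congr hcongr, Finset.tsum_subtype (Atup m (n.val ⟨r-1, by omega⟩))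
      (fun g => ∏ i, ((jn r m n.val g i : ℝ) ^ (K i))⁻¹)]
    have := fun (g : Fin m → ℕ) => prod_split r m hr0 k n.val g
    rw [Finset.sum_congr rfl fun g _ => this g]
    rw [← Finset.mul_sum]
    show _ * Usum m _ = _
    ring
  rw [← hHS.tsum_eq, tsum_congr hfib]
  show _ < ∑' n : DecTuple r, ∏ i, (((n : Fin r → ℕ) i : ℝ) ^ (k i))⁻¹
  have hTnonneg : ∀ n : ↥(DecTuple r), 0 ≤ ∏ i, ((n.val i : ℝ) ^ (k i))⁻¹ := by
    intro n
    exact Finset.prod_nonneg fun i _ => by positivity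
  have hble : ∀ n : ↥(DecTuple r),
      ((n.val ⟨r-1, by omega⟩ : ℕ) : ℝ)⁻¹ * Usum m (n.val ⟨r-1, by omega⟩) ≤ 1 := by
    intro n
    set b := n.val ⟨r-1, by omega⟩ with hb
    have hb1 : 1 ≤ b := n.property.1 _
    have hb0 : (0:ℝ) < (b : ℝ) := by exact_mod_cast Nat.lt_of_lt_of_le Nat.zero_lt_one hb1
    calc ((b:ℕ):ℝ)⁻¹ * Usum m b ≤ ((b:ℕ):ℝ)⁻¹ * b :=
          mul_le_mul_of_nonneg_left (Usum_le m b hb1) (by positivity)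
      _ = 1 := inv_mul_cancel₀ hb0.ne'
  have hle : ∀ n : ↥(DecTuple r),
      (∏ i, ((n.val i : ℝ) ^ (k i))⁻¹) *
          (((n.val ⟨r-1, by omega⟩ : ℕ) : ℝ)⁻¹ * Usum m (n.val ⟨r-1, by omega⟩))
        ≤ ∏ i, ((n.val i : ℝ) ^ (k i))⁻¹ := by
    intro n
    calc (∏ i, ((n.val i : ℝ) ^ (k i))⁻¹) *
          (((n.val ⟨r-1, by omega⟩ : ℕ) : ℝ)⁻¹ * Usum m (n.val ⟨r-1, by omega⟩))
        ≤ (∏ i, ((n.val i : ℝ) ^ (k i))⁻¹) * 1 :=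
          mul_le_mul_of_nonneg_left (hble n) (hTnonneg n)
      _ = _ := mul_one _
  -- the strict point : the constant tuple 2
  have h2mem : (fun _ : Fin r => 2) ∈ DecTuple r :=
    ⟨fun i => by norm_num, fun i j _ => le_refl 2⟩
  set n₂ : ↥(DecTuple r) := ⟨fun _ => 2, h2mem⟩ with hn₂
  have hstrict : (∏ i, ((n₂.val i : ℝ) ^ (k i))⁻¹) *
          (((n₂.val ⟨r-1, by omega⟩ : ℕ) : ℝ)⁻¹ * Usum m (n₂.val ⟨r-1, by omega⟩))
        < ∏ i, ((n₂.val i : ℝ) ^ (k i))⁻¹ := by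
    have hpos2 : 0 < ∏ i, ((n₂.val i : ℝ) ^ (k i))⁻¹ :=
      Finset.prod_pos fun i _ => by positivity
    have hU : ((2:ℕ):ℝ)⁻¹ * Usum m 2 < 1 := by
      have := Usum_lt m 2 (le_refl 2)
      have h2 : ((2:ℕ):ℝ) = 2 := by norm_num
      rw [h2] at this ⊢
      linarith
    calc (∏ i, ((n₂.val i : ℝ) ^ (k i))⁻¹) *
          (((n₂.val ⟨r-1, by omega⟩ : ℕ) : ℝ)⁻¹ * Usum m (n₂.val ⟨r-1, by omega⟩))
        < (∏ i, ((n₂.val i : ℝ) ^ (k i))⁻¹) * 1 :=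
          mul_lt_mul_of_pos_left hU hpos2
      _ = _ := mul_one _
  refine Summable.tsum_lt_tsum hle hstrict ?_ hTsum
  exact Summable.of_nonneg_of_le
    (fun n => mul_nonneg (hTnonneg n) (mul_nonneg (by positivity) (Usum_nonneg _ _)))
    hle hTsum
end

section
/- For all integers q ≥ 2, all integers i with 1 ≤ i ≤ q − 1, and all m ≥ 1, we have ∏_{n=2}^{m} (1 − 1/n^q)^{−1} ≤ 2m^{−i}/(m^{−i} + m^{−q}). -/
open scoped BigOperators

lemma telescope (m : ℕ) (hm : 1 ≤ m) :
    ∏ n ∈ Finset.Icc 2 m, (1 - ((n : ℝ) ^ 2)⁻¹)⁻¹ = 2 * m / (m + 1) := by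
  induction m with
  | zero => omega
  | succ m ih =>
    rcases Nat.eq_or_lt_of_le hm with h | h
    · simp [← h]; norm_num
    · have hm1 : 1 ≤ m := by omega
      rw [Finset.prod_Icc_succ_top (by omega), ih hm1]
      have h0 : (m : ℝ) > 0 := by exact_mod_cast hm1
      have h1 : ((m : ℝ) + 1) > 0 := by linarith
      have h2 : (1 : ℝ) - (((m : ℕ) + 1 : ℝ) ^ 2)⁻¹ = (m * (m + 2)) / ((m + 1) ^ 2) := by
        field_simp; ring
      push_cast
      rw [h2]
      field_simp
      ring

/-- for q ≥ 2, 1 ≤ i ≤ q−1 and m ≥ 1,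
∏_{n=2}^m (1 − 1/n^q)⁻¹ ≤ 2 m^{−i} / (m^{−i} + m^{−q}). -/
theorem stmt9 (q i m : ℕ) (hq : 2 ≤ q) (hi : 1 ≤ i) (hiq : i ≤ q - 1) (hm : 1 ≤ m) :
    ∏ n ∈ Finset.Icc 2 m, (1 - ((n : ℝ) ^ q)⁻¹)⁻¹ ≤
      2 * (m : ℝ) ^ (-(i : ℤ)) / ((m : ℝ) ^ (-(i : ℤ)) + (m : ℝ) ^ (-(q : ℤ))) := by
  have hM : (1 : ℝ) ≤ (m : ℝ) := by exact_mod_cast hm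
  have hM0 : (0 : ℝ) < m := by linarith
  -- step 1: product ≤ 2m/(m+1)
  have step1 : ∏ n ∈ Finset.Icc 2 m, (1 - ((n : ℝ) ^ q)⁻¹)⁻¹ ≤ 2 * m / (m + 1) := by
    rw [← telescope m hm]
    apply Finset.prod_le_prod
    · intro n hn
      have hn2 : 2 ≤ n := (Finset.mem_Icc.mp hn).1
      have hn2' : (2 : ℝ) ≤ n := by exact_mod_cast hn2
      have : ((n : ℝ) ^ q)⁻¹ < 1 := by
        rw [inv_lt_one_iff₀]
        right
        exact one_lt_pow₀ (by linarith) (by omega)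
      have : (0:ℝ) < 1 - ((n : ℝ) ^ q)⁻¹ := by linarith
      positivity
    · intro n hn
      have hn2 : 2 ≤ n := (Finset.mem_Icc.mp hn).1
      have hn2' : (2 : ℝ) ≤ n := by exact_mod_cast hn2
      have hpow : (n : ℝ) ^ 2 ≤ (n : ℝ) ^ q :=
        pow_le_pow_right₀ (by linarith) hq
      have h2pos : (0:ℝ) < (n : ℝ) ^ 2 := by positivity
      have hinv : ((n : ℝ) ^ q)⁻¹ ≤ ((n : ℝ) ^ 2)⁻¹ :=
        inv_anti₀ h2pos hpow
      have h2lt : ((n : ℝ) ^ 2)⁻¹ < 1 := by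
        rw [inv_lt_one_iff₀]; right; nlinarith
      apply inv_anti₀
      · linarith
      · linarith
  refine le_trans step1 ?_
  -- step 2: 2m/(m+1) ≤ RHS
  have hzi : (0:ℝ) < (m : ℝ) ^ (-(i : ℤ)) := zpow_pos hM0 _
  have hzq : (0:ℝ) < (m : ℝ) ^ (-(q : ℤ)) := zpow_pos hM0 _
  rw [div_le_div_iff₀ (by positivity) (by positivity)]
  have key : (m : ℝ) * (m : ℝ) ^ (-(q : ℤ)) ≤ (m : ℝ) ^ (-(i : ℤ)) := by
    have : (m : ℝ) * (m : ℝ) ^ (-(q : ℤ)) = (m : ℝ) ^ (1 - (q : ℤ)) := by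
      rw [sub_eq_add_neg, zpow_add₀ (ne_of_gt hM0), zpow_one]
    rw [this]
    exact zpow_le_zpow_right₀ hM (by omega)
  nlinarith [mul_pos hM0 hzq]
end

section
/- For any admissible index (k_1, …, k_r), the infinite multiple zeta-star value ζ*(k_1, …, k_r, {2}^∞) equals Σ_{n_1 ≥ ⋯ ≥ n_r ≥ 1} (1/(n_1^{k_1} ⋯ n_r^{k_r})) · (2 n_r/(n_r + 1)). -/
open scoped BigOperators

open Finset


noncomputable def psiAux : ℕ → ℕ → ℝ
  | 0, _ => 1
  | s+1, n => ∑ t ∈ Finset.Icc 1 n, (((t:ℝ))^2)⁻¹ * psiAux s t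

lemma psiAux_succ (s n : ℕ) :
    psiAux (s+1) n = ∑ t ∈ Finset.Icc 1 n, (((t:ℝ))^2)⁻¹ * psiAux s t := rfl

lemma psiAux_nonneg : ∀ s n, 0 ≤ psiAux s n
  | 0, _ => by simp [psiAux]
  | s+1, n => by
    rw [psiAux_succ]
    exact Finset.sum_nonneg fun t _ => mul_nonneg (by positivity) (psiAux_nonneg s t)

lemma psiAux_one : ∀ s, psiAux s 1 = 1
  | 0 => rfl
  | s+1 => by
    rw [psiAux_succ]
    simp [psiAux_one s]

lemma telesc (n : ℕ) :
    ∑ t ∈ Finset.Icc 1 n, (((t:ℝ))^2)⁻¹ * (2 * t / (t + 1)) = 2 * n / (n + 1) := by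
  induction n with
  | zero => simp
  | succ n ih =>
    rw [Finset.sum_Icc_succ_top (by omega), ih]
    have h1 : ((n:ℝ)+1) > 0 := by positivity
    have h2 : ((n:ℝ)+1+1) > 0 := by positivity
    push_cast
    field_simp
    ring

lemma sum_inv_sq_le : ∀ n : ℕ, 2 ≤ n → ∑ t ∈ Finset.Icc 2 n, (((t:ℝ))^2)⁻¹ ≤ 3/4 - (n:ℝ)⁻¹ := by
  intro n hn
  induction n, hn using Nat.le_induction with
  | base => norm_num
  | succ n hn ih =>
    rw [Finset.sum_Icc_succ_top (by omega)]
    have h1 : (2:ℝ) ≤ (n:ℝ) := by exact_mod_cast hn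
    have h2 : (0:ℝ) < (n:ℝ) := by linarith
    have h3 : (0:ℝ) < (n:ℝ)+1 := by linarith
    have key : (((n:ℝ)+1)^2)⁻¹ ≤ (n:ℝ)⁻¹ - ((n:ℝ)+1)⁻¹ := by
      rw [show (n:ℝ)⁻¹ - ((n:ℝ)+1)⁻¹ = ((n:ℝ)*((n:ℝ)+1))⁻¹ by
        field_simp; ring]
      apply inv_anti₀ (by positivity)
      nlinarith
    push_cast
    linarith

lemma sum_inv_sq_le' (n : ℕ) : ∑ t ∈ Finset.Icc 2 n, (((t:ℝ))^2)⁻¹ ≤ 3/4 := by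
  rcases le_or_gt 2 n with h | h
  · have := sum_inv_sq_le n h
    have : (0:ℝ) < (n:ℝ)⁻¹ := by positivity
    linarith [sum_inv_sq_le n ‹2 ≤ n›]
  · interval_cases n <;> norm_num

lemma psi_dist : ∀ s, ∀ n : ℕ, 1 ≤ n →
    |psiAux s n - 2 * (n:ℝ) / ((n:ℝ) + 1)| ≤ (3/4 : ℝ)^s := by
  intro s
  induction s with
  | zero =>
    intro n hn
    have h1 : (1:ℝ) ≤ (n:ℝ) := by exact_mod_cast hn
    have h2 : (0:ℝ) < (n:ℝ) + 1 := by linarith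
    have hle : 2 * (n:ℝ) / ((n:ℝ)+1) ≤ 2 := by
      rw [div_le_iff₀ h2]; linarith
    have hge : 1 ≤ 2 * (n:ℝ) / ((n:ℝ)+1) := by
      rw [le_div_iff₀ h2]; linarith
    rw [psiAux, pow_zero, abs_le]
    constructor <;> linarith
  | succ s ih =>
    intro n hn
    have key : psiAux (s+1) n - 2 * (n:ℝ)/((n:ℝ)+1)
        = ∑ t ∈ Finset.Icc 1 n, (((t:ℝ))^2)⁻¹ * (psiAux s t - 2 * t / (t+1)) := by
      rw [psiAux_succ, ← telesc n, ← Finset.sum_sub_distrib]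
      exact Finset.sum_congr rfl fun t _ => by ring
    rw [key]
    have hsplit : Finset.Icc 1 n = insert 1 (Finset.Icc 2 n) := by
      ext t; simp [Finset.mem_Icc, Finset.mem_insert]; omega
    rw [hsplit, Finset.sum_insert (by simp)]
    have h1 : psiAux s 1 - 2 * (1:ℕ) / ((1:ℕ)+1) = 0 := by
      rw [psiAux_one]; norm_num
    calc |(((1:ℕ):ℝ)^2)⁻¹ * (psiAux s 1 - 2 * (1:ℕ) / ((1:ℕ)+1)) +
          ∑ t ∈ Finset.Icc 2 n, (((t:ℝ))^2)⁻¹ * (psiAux s t - 2 * t / (t+1))|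
        = |∑ t ∈ Finset.Icc 2 n, (((t:ℝ))^2)⁻¹ * (psiAux s t - 2 * t / (t+1))| := by
          rw [h1]; simp
      _ ≤ ∑ t ∈ Finset.Icc 2 n, |(((t:ℝ))^2)⁻¹ * (psiAux s t - 2 * t / (t+1))| :=
          Finset.abs_sum_le_sum_abs _ _
      _ ≤ ∑ t ∈ Finset.Icc 2 n, (((t:ℝ))^2)⁻¹ * (3/4:ℝ)^s := by
          refine Finset.sum_le_sum fun t ht => ?_
          rw [abs_mul, abs_of_nonneg (by positivity)]
          have := ih t (by simp [Finset.mem_Icc] at ht; omega)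
          exact mul_le_mul_of_nonneg_left this (by positivity)
      _ = (∑ t ∈ Finset.Icc 2 n, (((t:ℝ))^2)⁻¹) * (3/4:ℝ)^s := by
          rw [Finset.sum_mul]
      _ ≤ (3/4:ℝ) * (3/4:ℝ)^s := by
          exact mul_le_mul_of_nonneg_right (sum_inv_sq_le' n) (by positivity)
      _ = (3/4:ℝ)^(s+1) := by ring

lemma psi_le_three (s : ℕ) (n : ℕ) (hn : 1 ≤ n) : psiAux s n ≤ 3 := by
  have h := psi_dist s n hn
  have h1 : (1:ℝ) ≤ (n:ℝ) := by exact_mod_cast hn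
  have h2 : (0:ℝ) < (n:ℝ) + 1 := by linarith
  have hle : 2 * (n:ℝ) / ((n:ℝ)+1) ≤ 2 := by rw [div_le_iff₀ h2]; linarith
  have hpow : (3/4:ℝ)^s ≤ 1 := pow_le_one₀ (by norm_num) (by norm_num)
  rw [abs_le] at h
  linarith [h.2]

open ENNReal in
noncomputable def PhiE (w : ℕ → ℝ≥0∞) (n : ℕ) : ℝ≥0∞ :=
  ∑ t ∈ Finset.Icc 1 n, (((t:ℝ≥0∞))^2)⁻¹ * w t

open ENNReal in
lemma phiE_iterate (s n : ℕ) :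
    (PhiE^[s] (fun _ => 1)) n = ENNReal.ofReal (psiAux s n) := by
  induction s generalizing n with
  | zero => simp [psiAux]
  | succ s ih =>
    rw [Function.iterate_succ_apply']
    have hstep : PhiE (PhiE^[s] fun _ => 1) n
        = ∑ t ∈ Finset.Icc 1 n, (((t:ℝ≥0∞))^2)⁻¹ * ENNReal.ofReal (psiAux s t) := by
      rw [PhiE]
      exact Finset.sum_congr rfl fun t _ => by rw [ih]
    rw [hstep, psiAux_succ]
    rw [ENNReal.ofReal_sum_of_nonneg (fun t _ => by
      have := psiAux_nonneg s t; positivity)]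
    refine Finset.sum_congr rfl fun t ht => ?_
    have ht1 : 1 ≤ t := (Finset.mem_Icc.1 ht).1
    have htpos : (0:ℝ) < ((t:ℝ))^2 := by positivity
    rw [ENNReal.ofReal_mul (by positivity), ENNReal.ofReal_inv_of_pos htpos,
      ENNReal.ofReal_pow (by positivity), ENNReal.ofReal_natCast]

open ENNReal in
noncomputable def peelEquiv (n : ℕ) (hn : 1 ≤ n) :
    DecTuple (n+1) ≃
      (Σ f : DecTuple n, {t : ℕ // t ∈ Finset.Icc 1 ((f : Fin n → ℕ) ⟨n-1, by omega⟩)}) where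
  toFun g := ⟨⟨Fin.init (g : Fin (n+1) → ℕ),
      ⟨fun i => g.2.1 _, fun i j hij => g.2.2 _ _ (by simpa using hij)⟩⟩,
    ⟨(g : Fin (n+1) → ℕ) (Fin.last n), by
      simp only [Finset.mem_Icc]
      refine ⟨g.2.1 _, g.2.2 (Fin.castSucc ⟨n-1, by omega⟩) (Fin.last n) ?_⟩
      simp [Fin.le_def]⟩⟩
  invFun p := ⟨Fin.snoc (p.1 : Fin n → ℕ) p.2.1, by
    obtain ⟨⟨f, hf1, hf2⟩, ⟨t, ht⟩⟩ := p
    rw [Finset.mem_Icc] at ht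
    constructor
    · intro i
      refine Fin.lastCases ?_ (fun i => ?_) i
      · simpa using ht.1
      · simpa using hf1 i
    · intro i j hij
      rcases Fin.eq_castSucc_or_eq_last j with ⟨j', rfl⟩ | rfl
      · rcases Fin.eq_castSucc_or_eq_last i with ⟨i', rfl⟩ | rfl
        · simp only [Fin.snoc_castSucc]
          exact hf2 i' j' (by simpa using hij)
        · exfalso
          have := Fin.le_def.1 hij
          simp [Fin.lt_iff_val_lt_val] at this ⊢
          omega
      · rcases Fin.eq_castSucc_or_eq_last i with ⟨i', rfl⟩ | rfl
        · simp only [Fin.snoc_castSucc, Fin.snoc_last]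
          refine le_trans ht.2 (hf2 i' ⟨n-1, by omega⟩ ?_)
          simp [Fin.le_def]; omega
        · simp⟩
  left_inv g := Subtype.ext (Fin.snoc_init_self _)
  right_inv p := by
    obtain ⟨⟨f, hf⟩, ⟨t, ht⟩⟩ := p
    have h1 : Fin.init (Fin.snoc f t : Fin (n+1) → ℕ) = f := by simp
    refine Sigma.ext (Subtype.ext (by simpa using h1)) ?_
    rw [Subtype.heq_iff_coe_eq]
    · simp
    · intro x
      simp only [h1]

open ENNReal in
lemma peel (n : ℕ) (hn : 1 ≤ n) (K : Fin (n+1) → ℕ) (w : ℕ → ℝ≥0∞) :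
    ∑' g : DecTuple (n+1),
        (∏ i, (((g : Fin (n+1) → ℕ) i : ℝ≥0∞) ^ K i)⁻¹) * w ((g : Fin (n+1) → ℕ) (Fin.last n))
    = ∑' f : DecTuple n, (∏ i, (((f : Fin n → ℕ) i : ℝ≥0∞) ^ K (Fin.castSucc i))⁻¹) *
        (∑ t ∈ Finset.Icc 1 ((f : Fin n → ℕ) ⟨n-1, by omega⟩),
          ((t : ℝ≥0∞) ^ K (Fin.last n))⁻¹ * w t) := by
  rw [← Equiv.tsum_eq (peelEquiv n hn).symm]
  rw [ENNReal.tsum_sigma']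
  refine tsum_congr fun f => ?_
  have hcoe : ∀ t : {t : ℕ // t ∈ Finset.Icc 1 ((f : Fin n → ℕ) ⟨n-1, by omega⟩)},
      (((peelEquiv n hn).symm ⟨f, t⟩ : Fin (n+1) → ℕ))
        = Fin.snoc (f : Fin n → ℕ) (t : ℕ) := fun t => rfl
  calc ∑' t : {t : ℕ // t ∈ Finset.Icc 1 ((f : Fin n → ℕ) ⟨n-1, by omega⟩)},
        (∏ i, ((((peelEquiv n hn).symm ⟨f, t⟩ : Fin (n+1) → ℕ) i : ℝ≥0∞) ^ K i)⁻¹) *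
          w (((peelEquiv n hn).symm ⟨f, t⟩ : Fin (n+1) → ℕ) (Fin.last n))
      = ∑' t : {t : ℕ // t ∈ Finset.Icc 1 ((f : Fin n → ℕ) ⟨n-1, by omega⟩)},
        (∏ i, (((f : Fin n → ℕ) i : ℝ≥0∞) ^ K (Fin.castSucc i))⁻¹) *
          ((((t : ℕ) : ℝ≥0∞) ^ K (Fin.last n))⁻¹ * w (t : ℕ)) := by
        refine tsum_congr fun t => ?_
        rw [hcoe t]
        rw [Fin.prod_univ_castSucc]
        simp only [Fin.snoc_castSucc, Fin.snoc_last]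
        ring
    _ = ∑ t ∈ Finset.Icc 1 ((f : Fin n → ℕ) ⟨n-1, by omega⟩),
        (∏ i, (((f : Fin n → ℕ) i : ℝ≥0∞) ^ K (Fin.castSucc i))⁻¹) *
          (((t : ℝ≥0∞) ^ K (Fin.last n))⁻¹ * w t) :=
        Finset.tsum_subtype _ (fun (t : ℕ) => (∏ i, (((f : Fin n → ℕ) i : ℝ≥0∞) ^ K (Fin.castSucc i))⁻¹) *
          (((t : ℝ≥0∞) ^ K (Fin.last n))⁻¹ * w t))
    _ = _ := by rw [← Finset.mul_sum]

open ENNReal in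
lemma master (r : ℕ) (hr : 1 ≤ r) (k : Fin r → ℕ) :
    ∀ (s : ℕ) (w : ℕ → ℝ≥0∞),
    (∑' f : DecTuple (r + s),
      (∏ i, (((f : Fin (r+s) → ℕ) i : ℝ≥0∞) ^ (if h : (i:ℕ) < r then k ⟨i,h⟩ else 2))⁻¹) *
        w ((f : Fin (r+s) → ℕ) ⟨r+s-1, by omega⟩))
    = ∑' f : DecTuple r, (∏ i, (((f : Fin r → ℕ) i : ℝ≥0∞) ^ k i)⁻¹) *
        (PhiE^[s] w) ((f : Fin r → ℕ) ⟨r-1, by omega⟩) := by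
  intro s
  induction s with
  | zero =>
    intro w
    refine tsum_congr fun f => ?_
    simp only [Function.iterate_zero, id_eq]
    congr 1
    exact Finset.prod_congr rfl fun i _ => by
      rw [dif_pos (show (i:ℕ) < r by omega)]
      exact rfl
  | succ s ih =>
    intro w
    refine Eq.trans (peel (r+s) (by omega)
      (fun i : Fin (r+s+1) => if h : (i:ℕ) < r then k ⟨i,h⟩ else 2) w) ?_
    have h2 : (∑' f : DecTuple (r+s),
        (∏ i, (((f : Fin (r+s) → ℕ) i : ℝ≥0∞) ^
          (if h : ((Fin.castSucc i : Fin (r+s+1)) :ℕ) < r then k ⟨(Fin.castSucc i :ℕ), h⟩ else 2))⁻¹) *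
        (∑ t ∈ Finset.Icc 1 ((f : Fin (r+s) → ℕ) ⟨r+s-1, by omega⟩),
          ((t : ℝ≥0∞) ^ (if h : ((Fin.last (r+s) : Fin (r+s+1)) :ℕ) < r then k ⟨(Fin.last (r+s) :ℕ), h⟩ else 2))⁻¹ * w t))
        = ∑' f : DecTuple (r+s),
        (∏ i, (((f : Fin (r+s) → ℕ) i : ℝ≥0∞) ^ (if h : (i:ℕ) < r then k ⟨i,h⟩ else 2))⁻¹) *
          (PhiE w) ((f : Fin (r+s) → ℕ) ⟨r+s-1, by omega⟩) := by
      refine tsum_congr fun f => ?_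
      refine congrArg₂ (· * ·) ?_ ?_
      · exact Finset.prod_congr rfl fun i _ => by simp only [Fin.coe_castSucc]
      · rw [PhiE]
        refine Finset.sum_congr rfl fun t _ => ?_
        rw [dif_neg (by simp)]
    exact h2.trans ((ih (PhiE w)).trans (by rw [← Function.iterate_succ_apply]))

open ENNReal in
lemma pi_tsum_ne_top (w : ℕ → ℝ≥0∞) (hw : ∑' n, w n ≠ ⊤) :
    ∀ m : ℕ, ∑' f : Fin m → ℕ, ∏ i, w (f i) ≠ ⊤ := by
  intro m
  induction m with
  | zero =>
    rw [tsum_eq_single (fun i => i.elim0) (fun b hb => absurd (Subsingleton.elim b _) hb)]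
    simp
  | succ m ih =>
    rw [← Equiv.tsum_eq (Fin.consEquiv (fun _ : Fin (m+1) => ℕ))]
    have key : ∀ p : (fun _ : Fin (m+1) => ℕ) 0 × ((i : Fin m) → ℕ),
        (∏ i, w ((Fin.consEquiv (fun _ : Fin (m+1) => ℕ)) p i))
          = w p.1 * ∏ i, w (p.2 i) := by
      rintro ⟨a, g⟩
      rw [Fin.prod_univ_succ]
      simp [Fin.consEquiv]
    calc (∑' p : (fun _ : Fin (m+1) => ℕ) 0 × ((i : Fin m) → ℕ),
            ∏ i, w ((Fin.consEquiv (fun _ : Fin (m+1) => ℕ)) p i))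
        = ∑' p : ℕ × (Fin m → ℕ), w p.1 * ∏ i, w (p.2 i) := tsum_congr key
      _ = (∑' n, w n) * ∑' f : Fin m → ℕ, ∏ i, w (f i) := by
          rw [ENNReal.tsum_prod']
          rw [show (∑' (a : ℕ) (g : Fin m → ℕ), w a * ∏ i, w (g i))
              = ∑' (a : ℕ), w a * ∑' g : Fin m → ℕ, ∏ i, w (g i) from
            tsum_congr fun a => ENNReal.tsum_mul_left]
          exact ENNReal.tsum_mul_right
      _ ≠ ⊤ := ENNReal.mul_ne_top hw ih

open ENNReal in
lemma decTuple_tsum_ne_top (r : ℕ) (hr : 1 ≤ r) (k : Fin r → ℕ)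
    (hadm : 2 ≤ k ⟨0, hr⟩) (hpos : ∀ i, 1 ≤ k i) :
    ∑' f : DecTuple r, ENNReal.ofReal (∏ i, (((f : Fin r → ℕ) i : ℝ) ^ (k i))⁻¹) ≠ ⊤ := by
  have hr0 : (0:ℝ) < (r:ℝ) := by exact_mod_cast hr
  set p : ℝ := 1 + (r:ℝ)⁻¹ with hpdef
  have hp : 1 < p := by
    have : (0:ℝ) < (r:ℝ)⁻¹ := by positivity
    simp only [hpdef]; linarith
  have hp0 : 0 < p := by linarith
  set w : ℕ → ℝ≥0∞ := fun n => ENNReal.ofReal (((n:ℝ) ^ p)⁻¹) with hwdef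
  have hsum : Summable (fun n : ℕ => ((n:ℝ) ^ p)⁻¹) := Real.summable_nat_rpow_inv.2 hp
  have hw : ∑' n, w n ≠ ⊤ := by
    rw [hwdef, ← ENNReal.ofReal_tsum_of_nonneg (fun n => by positivity) hsum]
    exact ENNReal.ofReal_ne_top
  have hbound : ∀ f : DecTuple r,
      ENNReal.ofReal (∏ i, (((f : Fin r → ℕ) i : ℝ) ^ (k i))⁻¹)
        ≤ ∏ i, w ((f : Fin r → ℕ) i) := by
    rintro ⟨f, hf1, hf2⟩
    simp only [hwdef]
    rw [← ENNReal.ofReal_prod_of_nonneg (fun i _ => by positivity)]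
    apply ENNReal.ofReal_le_ofReal
    set i0 : Fin r := ⟨0, hr⟩ with hi0
    have hN1 : ∀ i, (1:ℝ) ≤ (f i : ℝ) := fun i => by exact_mod_cast hf1 i
    have hN1' : ∀ i, (0:ℝ) < (f i : ℝ) := fun i => lt_of_lt_of_le one_pos (hN1 i)
    have hN0 : ∀ i, (f i : ℝ) ≤ (f i0 : ℝ) := fun i => by
      exact_mod_cast hf2 i0 i (by simp [hi0, Fin.le_def])
    have key : ∏ i, ((f i : ℝ)) ^ p ≤ ∏ i, ((f i : ℝ)) ^ (k i) := by
      have h1 : ∏ i, ((f i : ℝ)) ^ p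
          = (∏ i, (f i : ℝ)) * ∏ i, ((f i : ℝ)) ^ ((r:ℝ)⁻¹) := by
        rw [← Finset.prod_mul_distrib]
        refine Finset.prod_congr rfl fun i _ => ?_
        rw [hpdef, Real.rpow_add (hN1' i), Real.rpow_one]
      have h2 : ∏ i, ((f i : ℝ)) ^ ((r:ℝ)⁻¹) ≤ (f i0 : ℝ) := by
        calc ∏ i, ((f i : ℝ)) ^ ((r:ℝ)⁻¹)
            ≤ ∏ _i : Fin r, ((f i0 : ℝ)) ^ ((r:ℝ)⁻¹) :=
              Finset.prod_le_prod (fun i _ => by positivity)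
                (fun i _ => Real.rpow_le_rpow (by positivity) (hN0 i) (by positivity))
          _ = (((f i0 : ℝ)) ^ ((r:ℝ)⁻¹)) ^ (r:ℕ) := by
              rw [Finset.prod_const, Finset.card_univ, Fintype.card_fin]
          _ = (f i0 : ℝ) := by
              rw [← Real.rpow_natCast (((f i0 : ℝ)) ^ ((r:ℝ)⁻¹)) r,
                ← Real.rpow_mul (by positivity),
                inv_mul_cancel₀ (show (r:ℝ) ≠ 0 by positivity), Real.rpow_one]
      have h3 : (∏ i, (f i : ℝ)) * (f i0 : ℝ) ≤ ∏ i, ((f i : ℝ)) ^ (k i) := by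
        have e1 : ∏ i, ((f i : ℝ)) ^ (k i)
            = ((f i0 : ℝ)) ^ (k i0) * ∏ i ∈ Finset.univ.erase i0, ((f i : ℝ)) ^ (k i) :=
          (Finset.mul_prod_erase _ _ (Finset.mem_univ i0)).symm
        have e2 : ∏ i, (f i : ℝ)
            = (f i0 : ℝ) * ∏ i ∈ Finset.univ.erase i0, (f i : ℝ) :=
          (Finset.mul_prod_erase _ _ (Finset.mem_univ i0)).symm
        have hb : ∏ i ∈ Finset.univ.erase i0, (f i : ℝ)
            ≤ ∏ i ∈ Finset.univ.erase i0, ((f i : ℝ)) ^ (k i) :=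
          Finset.prod_le_prod (fun i _ => by positivity)
            (fun i _ => le_self_pow₀ (hN1 i) (Nat.one_le_iff_ne_zero.1 (hpos i)))
        have hsq : (f i0 : ℝ) * (f i0 : ℝ) ≤ ((f i0 : ℝ)) ^ (k i0) := by
          calc (f i0 : ℝ) * (f i0 : ℝ) = (f i0 : ℝ) ^ (2:ℕ) := by ring
            _ ≤ ((f i0 : ℝ)) ^ (k i0) := pow_le_pow_right₀ (hN1 i0) hadm
        calc (∏ i, (f i : ℝ)) * (f i0 : ℝ)
            = ((f i0 : ℝ) * (f i0 : ℝ)) * ∏ i ∈ Finset.univ.erase i0, (f i : ℝ) := by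
              rw [e2]; ring
          _ ≤ ((f i0 : ℝ)) ^ (k i0) * ∏ i ∈ Finset.univ.erase i0, ((f i : ℝ)) ^ (k i) := by
              exact mul_le_mul hsq hb (Finset.prod_nonneg fun i _ => (hN1' i).le)
                (pow_nonneg (hN1' i0).le _)
          _ = ∏ i, ((f i : ℝ)) ^ (k i) := e1.symm
      calc ∏ i, ((f i : ℝ)) ^ p
          = (∏ i, (f i : ℝ)) * ∏ i, ((f i : ℝ)) ^ ((r:ℝ)⁻¹) := h1
        _ ≤ (∏ i, (f i : ℝ)) * (f i0 : ℝ) :=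
            mul_le_mul_of_nonneg_left h2 (Finset.prod_nonneg fun i _ => by positivity)
        _ ≤ ∏ i, ((f i : ℝ)) ^ (k i) := h3
    calc ∏ i, (((f i : ℝ)) ^ (k i))⁻¹
        = (∏ i, ((f i : ℝ)) ^ (k i))⁻¹ := by rw [Finset.prod_inv_distrib]
      _ ≤ (∏ i, ((f i : ℝ)) ^ p)⁻¹ := inv_anti₀ (Finset.prod_pos fun i _ => Real.rpow_pos_of_pos (hN1' i) p) key
      _ = ∏ i, (((f i : ℝ)) ^ p)⁻¹ := by rw [Finset.prod_inv_distrib]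
  refine ne_top_of_le_ne_top (pi_tsum_ne_top w hw r) ?_
  calc ∑' f : DecTuple r, ENNReal.ofReal (∏ i, (((f : Fin r → ℕ) i : ℝ) ^ (k i))⁻¹)
      ≤ ∑' f : DecTuple r, ∏ i, w ((f : Fin r → ℕ) i) := ENNReal.tsum_le_tsum hbound
    _ = ∑' f : Fin r → ℕ, Set.indicator (DecTuple r) (fun f => ∏ i, w (f i)) f :=
        _root_.tsum_subtype (DecTuple r) (fun f => ∏ i, w (f i))
    _ ≤ ∑' f : Fin r → ℕ, ∏ i, w (f i) :=
        ENNReal.tsum_le_tsum fun f => Set.indicator_le_self _ _ f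


open ENNReal

/-- ζ*(k_1,…,k_r,{2}^∞)
= Σ_{n_1 ≥ ⋯ ≥ n_r ≥ 1} (1/(n_1^{k_1}⋯n_r^{k_r})) · (2n_r/(n_r+1)). -/
theorem stmt13 (r : ℕ) (hr : 1 ≤ r) (k : Fin r → ℕ)
    (hadm : 2 ≤ k ⟨0, by omega⟩) (hpos : ∀ i, 1 ≤ k i) :
    Filter.Tendsto
      (fun s : ℕ => zetaStar (fun i : Fin (r + s) =>
        if h : (i : ℕ) < r then k ⟨i, h⟩ else 2))
      Filter.atTop
      (nhds (∑' f : DecTuple r,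
        (∏ i, (((f : Fin r → ℕ) i : ℝ) ^ (k i))⁻¹) *
          (2 * ((f : Fin r → ℕ) ⟨r - 1, by omega⟩ : ℝ) /
            (((f : Fin r → ℕ) ⟨r - 1, by omega⟩ : ℝ) + 1)))) := by
  set aR : DecTuple r → ℝ := fun f => ∏ i, (((f : Fin r → ℕ) i : ℝ) ^ (k i))⁻¹ with haRdef
  set x : DecTuple r → ℕ := fun f => (f : Fin r → ℕ) ⟨r - 1, by omega⟩ with hxdef
  have hx1 : ∀ f, 1 ≤ x f := fun f => f.2.1 _
  have haR0 : ∀ f, 0 ≤ aR f := fun f =>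
    Finset.prod_nonneg fun i _ => by positivity
  have hS : ∑' f : DecTuple r, ENNReal.ofReal (aR f) ≠ ⊤ :=
    decTuple_tsum_ne_top r hr k hadm hpos
  have hsaR : Summable aR := by
    have h1 := ENNReal.summable_toReal hS
    have h2 : (fun f : DecTuple r => (ENNReal.ofReal (aR f)).toReal) = aR := by
      funext f; exact ENNReal.toReal_ofReal (haR0 f)
    rwa [h2] at h1
  -- the per-s identity
  have hzeta : ∀ s : ℕ,
      zetaStar (fun i : Fin (r + s) => if h : (i : ℕ) < r then k ⟨i, h⟩ else 2)
        = ∑' f : DecTuple r, aR f * psiAux s (x f) := by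
    intro s
    have hm := master r hr k s (fun _ => 1)
    have hE : (∑' f : DecTuple (r + s),
        ∏ i, (((f : Fin (r+s) → ℕ) i : ℝ≥0∞) ^ (if h : (i:ℕ) < r then k ⟨i,h⟩ else 2))⁻¹)
        = ∑' f : DecTuple r, ENNReal.ofReal (aR f * psiAux s (x f)) := by
      refine Eq.trans (tsum_congr fun f => (mul_one _).symm) (hm.trans (tsum_congr fun f => ?_))
      rw [phiE_iterate]
      have hprod : (∏ i, (((f : Fin r → ℕ) i : ℝ≥0∞) ^ (k i))⁻¹)
          = ENNReal.ofReal (aR f) := by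
        calc ∏ i, (((f : Fin r → ℕ) i : ℝ≥0∞) ^ (k i))⁻¹
            = ∏ i, ENNReal.ofReal ((((f : Fin r → ℕ) i : ℝ)) ^ (k i))⁻¹ := by
              refine Finset.prod_congr rfl fun i _ => ?_
              have hge : 1 ≤ (f : Fin r → ℕ) i := f.2.1 i
              have hpo : (0:ℝ) < ((f : Fin r → ℕ) i : ℝ) := by exact_mod_cast hge
              rw [ENNReal.ofReal_inv_of_pos (by positivity), ENNReal.ofReal_pow hpo.le,
                ENNReal.ofReal_natCast]
          _ = ENNReal.ofReal (aR f) :=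
              (ENNReal.ofReal_prod_of_nonneg (fun i _ => by positivity)).symm
      rw [hprod, ← ENNReal.ofReal_mul (haR0 f)]
    have hne : ∀ f : DecTuple (r + s),
        (∏ i, (((f : Fin (r+s) → ℕ) i : ℝ≥0∞) ^ (if h : (i:ℕ) < r then k ⟨i,h⟩ else 2))⁻¹) ≠ ⊤ := by
      intro f
      refine (ENNReal.prod_lt_top fun i _ => ?_).ne
      have hge : 1 ≤ (f : Fin (r+s) → ℕ) i := f.2.1 i
      exact (ENNReal.inv_ne_top.2 (pow_ne_zero _ (Nat.cast_ne_zero.2 (by omega)))).lt_top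
    calc zetaStar (fun i : Fin (r + s) => if h : (i : ℕ) < r then k ⟨i, h⟩ else 2)
        = ∑' f : DecTuple (r + s),
            (∏ i, (((f : Fin (r+s) → ℕ) i : ℝ≥0∞) ^ (if h : (i:ℕ) < r then k ⟨i,h⟩ else 2))⁻¹).toReal := by
          rw [zetaStar]
          refine tsum_congr fun f => ?_
          rw [ENNReal.toReal_prod]
          exact Finset.prod_congr rfl fun i _ => by
            generalize (if h : (i:ℕ) < r then k ⟨i,h⟩ else 2) = e
            rw [ENNReal.toReal_inv, ENNReal.toReal_pow, ENNReal.toReal_natCast]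
      _ = (∑' f : DecTuple (r + s),
            ∏ i, (((f : Fin (r+s) → ℕ) i : ℝ≥0∞) ^ (if h : (i:ℕ) < r then k ⟨i,h⟩ else 2))⁻¹).toReal :=
          (ENNReal.tsum_toReal_eq hne).symm
      _ = (∑' f : DecTuple r, ENNReal.ofReal (aR f * psiAux s (x f))).toReal := by rw [hE]
      _ = ∑' f : DecTuple r, aR f * psiAux s (x f) := by
          rw [ENNReal.tsum_toReal_eq (fun f => ENNReal.ofReal_ne_top)]
          exact tsum_congr fun f => ENNReal.toReal_ofReal
            (mul_nonneg (haR0 f) (psiAux_nonneg s (x f)))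
  -- summability of the approximants and the target
  have hsum_s : ∀ s, Summable (fun f : DecTuple r => aR f * psiAux s (x f)) := by
    intro s
    refine Summable.of_nonneg_of_le
      (fun f => mul_nonneg (haR0 f) (psiAux_nonneg s (x f)))
      (fun f => mul_le_mul_of_nonneg_left (psi_le_three s (x f) (hx1 f)) (haR0 f))
      (hsaR.mul_right 3)
  have hg2 : ∀ n : ℕ, 1 ≤ n → 2 * (n:ℝ) / ((n:ℝ) + 1) ≤ 3 := by
    intro n hn
    have h1 : (1:ℝ) ≤ (n:ℝ) := by exact_mod_cast hn
    rw [div_le_iff₀ (by linarith)]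
    linarith
  have hg0 : ∀ n : ℕ, 0 ≤ 2 * (n:ℝ) / ((n:ℝ) + 1) := fun n => by positivity
  have htar : Summable (fun f : DecTuple r => aR f * (2 * (x f : ℝ) / ((x f : ℝ) + 1))) := by
    refine Summable.of_nonneg_of_le
      (fun f => mul_nonneg (haR0 f) (hg0 (x f)))
      (fun f => mul_le_mul_of_nonneg_left (hg2 (x f) (hx1 f)) (haR0 f))
      (hsaR.mul_right 3)
  set L : ℝ := ∑' f : DecTuple r, aR f * (2 * (x f : ℝ) / ((x f : ℝ) + 1)) with hLdef
  set A : ℝ := ∑' f : DecTuple r, aR f with hAdef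
  have hbd : ∀ s : ℕ, |(∑' f : DecTuple r, aR f * psiAux s (x f)) - L| ≤ A * (3/4:ℝ)^s := by
    intro s
    rw [hLdef, ← Summable.tsum_sub (hsum_s s) htar, ← Real.norm_eq_abs]
    have hA : HasSum (fun f : DecTuple r => aR f * (3/4:ℝ)^s) (A * (3/4:ℝ)^s) :=
      hsaR.hasSum.mul_right _
    refine tsum_of_norm_bounded hA fun f => ?_
    rw [← mul_sub, Real.norm_eq_abs, abs_mul, abs_of_nonneg (haR0 f)]
    exact mul_le_mul_of_nonneg_left (psi_dist s (x f) (hx1 f)) (haR0 f)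
  have h0 : Filter.Tendsto (fun s : ℕ => A * (3/4:ℝ)^s) Filter.atTop (nhds 0) := by
    have := (tendsto_pow_atTop_nhds_zero_of_lt_one (by norm_num : (0:ℝ) ≤ 3/4)
      (by norm_num : (3/4:ℝ) < 1)).const_mul A
    simpa using this
  have hmain : Filter.Tendsto (fun s : ℕ => (∑' f : DecTuple r, aR f * psiAux s (x f)) - L)
      Filter.atTop (nhds 0) :=
    squeeze_zero_norm (fun s => by rw [Real.norm_eq_abs]; exact hbd s) h0
  have hmain2 : Filter.Tendsto (fun s : ℕ => ∑' f : DecTuple r, aR f * psiAux s (x f))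
      Filter.atTop (nhds L) := by
    have := hmain.add_const L
    simpa using this
  have hfun : (fun s : ℕ => zetaStar (fun i : Fin (r + s) =>
      if h : (i : ℕ) < r then k ⟨i, h⟩ else 2))
      = fun s : ℕ => ∑' f : DecTuple r, aR f * psiAux s (x f) := funext hzeta
  rw [hfun]
  exact hmain2
end
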